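/- The four permutations ι_1 = (1,11)(2,22)(4,20)(7,12)(8,17)(10,18)(13,21)(14,16), ι_2 = (1,13)(2,12)(4,14)(7,22)(8,10)(11,21)(16,20)(17,18), ι_3 = (1,14)(2,17)(4,13)(7,10)(8,22)(11,16)(12,18)(20,21), ι_4 = (1,17)(2,14)(4,12)(7,20)(8,11)(10,21)(13,18)(16,22) of {1,...,24} are automorphisms of the extended binary Golay code, commute pairwise, each have order 2, and generate a subgroup isomorphic to (Z/2)^4 that fixes every point of the octad {3,5,6,9,15,19,23,24}. -/
import Mathlib


/-- The indicator vector in `𝔽₂²⁴` of a set of labels in `{1,…,24}`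
(coordinate `i : Fin 24` carries the label `i+1`). -/
def indic (s : Finset ℕ) : Fin 24 → ZMod 2 := fun i => if (i : ℕ) + 1 ∈ s then 1 else 0

/-- An explicit basis of the extended binary Golay code, given by the support sets
of nine octads and three dodecads. -/
def golayBasisSets : Fin 12 → Finset ℕ :=
  ![{1,2,16,18,5,12,22,3}, {7,4,19,10,12,15,8,16}, {23,3,9,19,13,18,8,11},
    {6,3,22,4,21,17,15,9}, {20,10,11,17,14,13,22,12}, {24,2,10,19,9,5,14,21},
    {8,7,15,17,11,23,18,16}, {16,1,2,21,4,7,8,18}, {18,1,16,8,23,13,14,5},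
    {8,7,15,9,19,23,4,22,13,18,1,16}, {18,23,13,22,3,1,11,10,2,16,7,8},
    {16,1,2,10,12,7,5,9,15,8,23,18}]

/-- The extended binary Golay code `𝒢₂₄ ⊂ 𝔽₂²⁴`. -/
def golayCode : Submodule (ZMod 2) (Fin 24 → ZMod 2) :=
  Submodule.span (ZMod 2) (Set.range fun i => indic (golayBasisSets i))

/-- The weight of a vector in `𝔽₂²⁴`: the number of nonzero coordinates. -/
def weight (v : Fin 24 → ZMod 2) : ℕ := (Finset.univ.filter fun i => v i ≠ 0).card

/-- The special octad `𝒪₉ = {3,5,6,9,15,19,23,24}`. -/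
def O9 : Finset ℕ := {3, 5, 6, 9, 15, 19, 23, 24}

/-- The four involutions `ι₁, …, ι₄` of `{1,…,24}` (coordinates zero-based: the
coordinate `i : Fin 24` carries the label `i+1`):
`ι₁ = (1,11)(2,22)(4,20)(7,12)(8,17)(10,18)(13,21)(14,16)`, etc. -/
def ι : Fin 4 → Equiv.Perm (Fin 24) :=
  ![Equiv.swap 0 10 * Equiv.swap 1 21 * Equiv.swap 3 19 * Equiv.swap 6 11 *
      Equiv.swap 7 16 * Equiv.swap 9 17 * Equiv.swap 12 20 * Equiv.swap 13 15,
    Equiv.swap 0 12 * Equiv.swap 1 11 * Equiv.swap 3 13 * Equiv.swap 6 21 *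
      Equiv.swap 7 9 * Equiv.swap 10 20 * Equiv.swap 15 19 * Equiv.swap 16 17,
    Equiv.swap 0 13 * Equiv.swap 1 16 * Equiv.swap 3 12 * Equiv.swap 6 9 *
      Equiv.swap 7 21 * Equiv.swap 10 15 * Equiv.swap 11 17 * Equiv.swap 19 20,
    Equiv.swap 0 16 * Equiv.swap 1 13 * Equiv.swap 3 11 * Equiv.swap 6 19 *
      Equiv.swap 7 10 * Equiv.swap 9 20 * Equiv.swap 12 17 * Equiv.swap 15 21]

/-- Coefficients expressing each permuted basis vector in the given basis. -/
def Cmat : Fin 4 → Fin 12 → Fin 12 → ZMod 2 :=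
  ![![![0,0,0,0,0,0,0,0,1,0,1,0], ![1,0,1,0,1,0,0,0,0,0,0,1], ![0,0,0,0,0,0,1,1,0,1,1,0], ![1,0,0,1,1,0,0,1,1,0,1,0], ![0,0,0,0,0,0,0,1,0,0,0,0], ![0,1,1,0,0,1,0,1,1,0,1,1], ![1,0,0,0,0,0,1,0,1,0,1,0], ![0,0,0,0,1,0,0,0,0,0,0,0], ![0,0,1,0,0,0,1,1,1,1,1,0], ![0,0,0,0,1,0,0,1,0,1,0,0], ![1,0,1,0,0,0,1,1,1,1,1,0], ![0,1,0,0,0,0,1,0,1,1,0,0]],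
    ![![0,0,0,0,1,0,0,0,1,0,1,0], ![0,1,1,0,1,0,1,0,0,1,1,0], ![0,0,0,0,0,0,1,1,0,1,1,0], ![0,1,0,1,0,0,1,1,1,1,0,1], ![0,0,0,0,0,0,0,1,0,0,0,0], ![1,0,0,0,0,1,0,1,1,0,1,0], ![1,0,1,0,1,0,0,1,1,1,0,0], ![0,0,0,0,1,0,0,0,0,0,0,0], ![1,1,1,0,1,0,0,0,1,0,0,1], ![1,1,1,0,1,0,0,0,0,1,0,1], ![0,1,1,0,1,0,0,1,1,0,0,1], ![1,0,0,0,1,0,0,0,1,0,1,1]],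
    ![![1,1,0,0,0,0,1,0,1,1,0,1], ![1,0,1,0,0,0,0,0,0,0,0,1], ![1,1,0,0,0,0,0,0,0,0,0,1], ![1,0,0,1,1,0,0,1,1,0,1,0], ![0,0,0,0,0,0,0,1,0,0,0,0], ![1,1,1,0,1,1,0,1,0,0,0,1], ![1,1,0,0,0,0,0,0,0,1,1,1], ![0,0,0,0,1,0,0,0,0,0,0,0], ![1,1,1,0,0,0,0,0,1,0,0,1], ![1,0,0,0,0,0,0,0,1,1,1,0], ![1,0,1,0,0,0,1,0,1,1,1,0], ![0,1,0,0,0,0,1,0,1,1,0,0]],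
    ![![0,0,1,0,0,0,1,0,1,1,0,0], ![1,1,1,0,1,0,1,1,1,1,0,0], ![0,0,1,0,0,0,0,0,0,0,0,0], ![1,1,0,1,0,0,1,1,0,1,1,1], ![0,0,0,0,0,0,0,1,0,0,0,0], ![0,0,0,0,0,1,0,0,0,0,0,0], ![1,0,0,0,1,0,1,0,1,0,1,0], ![0,0,0,0,1,0,0,0,0,0,0,0], ![0,1,0,0,0,0,1,0,0,1,0,1], ![0,1,1,0,1,0,0,0,1,1,1,1], ![1,1,1,0,1,0,0,1,0,0,1,1], ![0,0,0,0,1,0,0,1,0,0,0,1]]]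

set_option maxHeartbeats 2000000 in
lemma key : ∀ (k : Fin 4) (i : Fin 12),
    indic (golayBasisSets i) ∘ ⇑(ι k) = ∑ j, Cmat k i j • indic (golayBasisSets j) := by
  decide

lemma sum_mem_golay (c : Fin 12 → ZMod 2) :
    (∑ j, c j • indic (golayBasisSets j)) ∈ golayCode :=
  Submodule.sum_mem _ fun j _ => Submodule.smul_mem _ _ (Submodule.subset_span ⟨j, rfl⟩)

/-- Four-parameter product of the involutions. -/
def G (a b c d : ZMod 2) : Equiv.Perm (Fin 24) :=
  ι 0 ^ a.val * ι 1 ^ b.val * ι 2 ^ c.val * ι 3 ^ d.val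

/-- The underlying function of the homomorphism from `(ℤ/2)⁴`. -/
def Fmap : (Fin 4 → Multiplicative (ZMod 2)) → Equiv.Perm (Fin 24) :=
  fun f => G (Multiplicative.toAdd (f 0)) (Multiplicative.toAdd (f 1))
    (Multiplicative.toAdd (f 2)) (Multiplicative.toAdd (f 3))

set_option maxHeartbeats 8000000 in
set_option maxRecDepth 40000 in
lemma G_mul : ∀ a b c d a' b' c' d' : ZMod 2,
    G (a + a') (b + b') (c + c') (d + d') = G a b c d * G a' b' c' d' := by decide

set_option maxHeartbeats 8000000 in
set_option maxRecDepth 40000 in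
lemma G_inj : ∀ a b c d a' b' c' d' : ZMod 2,
    G a b c d = G a' b' c' d' → a = a' ∧ b = b' ∧ c = c' ∧ d = d' := by decide

lemma Fmap_mul : ∀ f g, Fmap (f * g) = Fmap f * Fmap g := fun f g =>
  G_mul (Multiplicative.toAdd (f 0)) (Multiplicative.toAdd (f 1))
    (Multiplicative.toAdd (f 2)) (Multiplicative.toAdd (f 3))
    (Multiplicative.toAdd (g 0)) (Multiplicative.toAdd (g 1))
    (Multiplicative.toAdd (g 2)) (Multiplicative.toAdd (g 3))

lemma Fmap_inj : ∀ f g, Fmap f = Fmap g → f = g := by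
  intro f g h
  obtain ⟨h0, h1, h2, h3⟩ := G_inj _ _ _ _ _ _ _ _ h
  funext k
  fin_cases k
  · exact h0
  · exact h1
  · exact h2
  · exact h3

set_option maxHeartbeats 8000000 in
set_option maxRecDepth 40000 in
lemma Fmap_single : ∀ k : Fin 4, Fmap (Pi.mulSingle k (Multiplicative.ofAdd 1)) = ι k := by
  decide

/-- The four permutations `ι₁, …, ι₄` are automorphisms of the extended binary Golay
code, commute pairwise, have order 2, generate a subgroup isomorphic to `(ℤ/2)⁴`, and
fix every point of the octad `𝒪₉ = {3,5,6,9,15,19,23,24}`. -/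
theorem iota_translations :
    (∀ k : Fin 4, ∀ v ∈ golayCode, v ∘ ⇑(ι k) ∈ golayCode) ∧
    (∀ k l : Fin 4, ι k * ι l = ι l * ι k) ∧
    (∀ k : Fin 4, orderOf (ι k) = 2) ∧
    Nonempty (Subgroup.closure (Set.range ι) ≃* (Fin 4 → Multiplicative (ZMod 2))) ∧
    (∀ k : Fin 4, ∀ n : Fin 24, (n : ℕ) + 1 ∈ O9 → ι k n = n) := by
  refine ⟨?_, by decide, ?_, ?_, by decide⟩
  · intro k v hv
    have h : golayCode ≤
        Submodule.comap (LinearMap.funLeft (ZMod 2) (ZMod 2) (ι k)) golayCode := by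
      rw [golayCode, Submodule.span_le]
      rintro _ ⟨i, rfl⟩
      simp only [SetLike.mem_coe, Submodule.mem_comap]
      show indic (golayBasisSets i) ∘ ⇑(ι k) ∈ golayCode
      rw [key k i]; exact sum_mem_golay _
    exact h hv
  · intro k
    exact orderOf_eq_prime (by revert k; decide) (by revert k; decide)
  · set φ : (Fin 4 → Multiplicative (ZMod 2)) →* Equiv.Perm (Fin 24) :=
      MonoidHom.mk' Fmap Fmap_mul with hφ
    have hrange : φ.range = Subgroup.closure (Set.range ι) := by
      apply le_antisymm
      · rintro _ ⟨f, rfl⟩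
        show Fmap f ∈ _
        have hmem : ∀ k : Fin 4, ∀ n : ℕ,
            ι k ^ n ∈ Subgroup.closure (Set.range ι) := fun k n =>
          Subgroup.pow_mem _ (Subgroup.subset_closure (Set.mem_range_self k)) _
        exact mul_mem (mul_mem (mul_mem (hmem 0 _) (hmem 1 _)) (hmem 2 _)) (hmem 3 _)
      · rw [Subgroup.closure_le]
        rintro _ ⟨k, rfl⟩
        exact ⟨Pi.mulSingle k (Multiplicative.ofAdd 1), Fmap_single k⟩
    have hinj : Function.Injective φ := fun f g h => Fmap_inj f g h
    exact ⟨((MulEquiv.subgroupCongr hrange.symm).trans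
      (MonoidHom.ofInjective hinj).symm)⟩
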